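/- Let A be m×n and B be p×q real matrices with m+p ≤ n+q, and let M = A ⊕ B (block diagonal direct sum). Then M has the SSVP if and only if: (a) m ≤ n and p ≤ q; (b) both A and B have the SSVP; (c) A and B share no common nonzero singular value; and (d) either both A and B have linearly independent rows, or one of A and B is square and invertible. -/

import Mathlib

open Matrix

/-- The strong singular value property. -/
def HasSSVP {m n : Type*} [Fintype m] [Fintype n] (A : Matrix m n ℝ) : Prop :=
  ∀ X : Matrix m n ℝ,
    (X * Aᵀ).IsSymm → (Aᵀ * X).IsSymm → (∀ i j, A i j ≠ 0 → X i j = 0) → X = 0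

/-- The singular values of a real m×n matrix. -/
noncomputable def sv {m n : ℕ} (A : Matrix (Fin m) (Fin n) ℝ) : Fin m → ℝ :=
  fun i => Real.sqrt ((Matrix.isHermitian_mul_conjTranspose_self A).eigenvalues i)

/- ---------- auxiliary lemmas ---------- -/

theorem conjT_eq {m n : ℕ} (A : Matrix (Fin m) (Fin n) ℝ) : Aᴴ = Aᵀ := by
  ext i j; simp [conjTranspose]

theorem rank_width_iff {a b : ℕ} (C : Matrix (Fin a) (Fin b) ℝ) :
    C.rank = b ↔ ∀ v, C *ᵥ v = 0 → v = 0 := by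
  rw [Matrix.rank]
  constructor
  · intro h v hv
    have h2 := LinearMap.finrank_range_add_finrank_ker C.mulVecLin
    rw [h] at h2
    simp [Module.finrank_pi] at h2
    exact LinearMap.ker_eq_bot.mp h2 (by simpa using hv : C.mulVecLin v = C.mulVecLin 0)
  · intro h
    have hk : LinearMap.ker C.mulVecLin = ⊥ := by
      rw [LinearMap.ker_eq_bot']
      intro v hv
      exact h v hv
    have h2 := LinearMap.finrank_range_add_finrank_ker C.mulVecLin
    rw [hk] at h2
    simpa [Module.finrank_pi] using h2

theorem rows_indep_iff {a b : ℕ} (C : Matrix (Fin a) (Fin b) ℝ) :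
    LinearIndependent ℝ (fun i => C i) ↔ ∀ u, Cᵀ *ᵥ u = 0 → u = 0 := by
  rw [Fintype.linearIndependent_iff]
  constructor
  · intro h u hu
    funext i
    exact h u (by funext j; simpa [Matrix.mulVec, dotProduct, mul_comm] using congrFun hu j) i
  · intro h g hg
    have : Cᵀ *ᵥ g = 0 := by
      funext j
      simpa [Matrix.mulVec, dotProduct, mul_comm] using congrFun hg j
    exact fun i => congrFun (h g this) i

theorem ker_exists {a b : ℕ} (C : Matrix (Fin a) (Fin b) ℝ) (h : a < b) :
    ∃ v, v ≠ 0 ∧ C *ᵥ v = 0 := by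
  have hr : C.rank ≠ b := by
    have := C.rank_le_card_height
    simp only [Fintype.card_fin] at this
    omega
  have hr' : ¬ ∀ v, C *ᵥ v = 0 → v = 0 := fun hv => hr ((rank_width_iff C).mpr hv)
  push_neg at hr'
  obtain ⟨v, hv1, hv2⟩ := hr'
  exact ⟨v, hv2, hv1⟩

theorem eig_mem {a : ℕ} (S : Matrix (Fin a) (Fin a) ℝ) (hS : S.IsHermitian)
    (μ : ℝ) (w : Fin a → ℝ) (hw : w ≠ 0) (hSw : S *ᵥ w = μ • w) :
    ∃ j, hS.eigenvalues j = μ := by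
  by_contra hc
  push_neg at hc
  apply hw
  have hsym : Sᵀ = S := by
    have h := hS
    rwa [Matrix.IsHermitian, conjT_eq] at h
  have key : ∀ j, (⇑(hS.eigenvectorBasis j) : Fin a → ℝ) ⬝ᵥ w = 0 := by
    intro j
    have h1 : (S *ᵥ ⇑(hS.eigenvectorBasis j)) ⬝ᵥ w = ⇑(hS.eigenvectorBasis j) ⬝ᵥ (S *ᵥ w) := by
      rw [Matrix.dotProduct_mulVec, ← Matrix.vecMul_transpose, hsym]
    rw [hS.mulVec_eigenvectorBasis, hSw, smul_dotProduct, dotProduct_smul,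
      smul_eq_mul, smul_eq_mul] at h1
    have h2 : (hS.eigenvalues j - μ) * ((⇑(hS.eigenvectorBasis j) : Fin a → ℝ) ⬝ᵥ w) = 0 := by
      rw [sub_mul, h1, sub_self]
    rcases mul_eq_zero.mp h2 with h | h
    · exact absurd (by linarith) (hc j)
    · exact h
  have hrepr : ∀ j, hS.eigenvectorBasis.repr ((WithLp.equiv 2 (Fin a → ℝ)).symm w) j = 0 := by
    intro j
    rw [OrthonormalBasis.repr_apply_apply]
    simpa [PiLp.inner_apply, dotProduct, mul_comm] using key j
  have : (WithLp.equiv 2 (Fin a → ℝ)).symm w = 0 := by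
    apply hS.eigenvectorBasis.repr.map_eq_zero_iff.mp
    ext j; exact hrepr j
  exact congrArg WithLp.ofLp this

theorem vanish_basis {a b : ℕ} (T : Matrix (Fin b) (Fin a) ℝ) (S : Matrix (Fin a) (Fin a) ℝ)
    (hS : S.IsHermitian) (h : ∀ k, T *ᵥ (⇑(hS.eigenvectorBasis k) : Fin a → ℝ) = 0) : T = 0 := by
  have hv : ∀ v : Fin a → ℝ, T *ᵥ v = 0 := by
    intro v
    have hv' : v = ∑ k, hS.eigenvectorBasis.repr ((WithLp.equiv 2 (Fin a → ℝ)).symm v) k •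
        (⇑(hS.eigenvectorBasis k) : Fin a → ℝ) :=
      by
        have h := congrArg WithLp.ofLp (hS.eigenvectorBasis.sum_repr ((WithLp.equiv 2 (Fin a → ℝ)).symm v)).symm
        rw [WithLp.ofLp_sum] at h
        exact h
    rw [hv', show ∀ w, T *ᵥ w = T.mulVecLin w from fun _ => rfl, map_sum]
    simp only [Matrix.mulVecLin_apply, Matrix.mulVec_smul, h, smul_zero, Finset.sum_const_zero]
  ext i j
  have := congrFun (hv (Pi.single j 1)) i
  rw [Matrix.mulVec_single] at this
  simpa using this

theorem outer_mul_left {a b c : ℕ} (B : Matrix (Fin a) (Fin b) ℝ) (v : Fin b → ℝ) (u : Fin c → ℝ) :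
    B * vecMulVec v u = vecMulVec (B *ᵥ v) u := by
  ext i j
  simp [Matrix.mul_apply, vecMulVec_apply, Matrix.mulVec, dotProduct, Finset.sum_mul,
    mul_assoc]

theorem outer_mul_right {a b c : ℕ} (u : Fin a → ℝ) (v : Fin b → ℝ) (C : Matrix (Fin b) (Fin c) ℝ) :
    vecMulVec u v * C = vecMulVec u (v ᵥ* C) := by
  ext i j
  simp [Matrix.mul_apply, vecMulVec_apply, Matrix.vecMul, dotProduct, Finset.mul_sum,
    mul_assoc]

theorem vecMulVec_ne_zero {a b : ℕ} {u : Fin a → ℝ} {v : Fin b → ℝ} (hu : u ≠ 0) (hv : v ≠ 0) :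
    vecMulVec u v ≠ 0 := by
  obtain ⟨i, hi⟩ := Function.ne_iff.mp hu
  obtain ⟨j, hj⟩ := Function.ne_iff.mp hv
  intro h
  have := congrFun (congrFun h i) j
  rw [vecMulVec_apply] at this
  simp only [Matrix.zero_apply] at this
  exact (mul_ne_zero (by simpa using hi) (by simpa using hj)) this

theorem mul_zero_ker {a b c : ℕ} (C : Matrix (Fin a) (Fin b) ℝ) (Z : Matrix (Fin b) (Fin c) ℝ)
    (h : ∀ u, C *ᵥ u = 0 → u = 0) (hCZ : C * Z = 0) : Z = 0 := by
  ext i j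
  have hcol : C *ᵥ (fun i => Z i j) = 0 := by
    funext r
    simpa [Matrix.mulVec, dotProduct, Matrix.mul_apply] using
      congrFun (congrFun hCZ r) j
  exact congrFun (h _ hcol) i

theorem gram_ker {a b : ℕ} (C : Matrix (Fin a) (Fin b) ℝ) (v : Fin b → ℝ)
    (h : (Cᵀ * C) *ᵥ v = 0) : C *ᵥ v = 0 := by
  have hk : v ∈ LinearMap.ker (Cᵀ * C).mulVecLin := LinearMap.mem_ker.mpr h
  rw [Matrix.ker_mulVecLin_transpose_mul_self] at hk
  exact LinearMap.mem_ker.mp hk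

theorem vecMulVec_transpose' {a b : ℕ} (u : Fin a → ℝ) (v : Fin b → ℝ) :
    (vecMulVec u v)ᵀ = vecMulVec v u := by
  ext i j; simp [vecMulVec_apply, mul_comm]

theorem vecMulVec_zero_left {a b : ℕ} (v : Fin b → ℝ) :
    vecMulVec (0 : Fin a → ℝ) v = 0 := by
  ext i j; simp [vecMulVec_apply]

theorem vecMulVec_zero_right {a b : ℕ} (u : Fin a → ℝ) :
    vecMulVec u (0 : Fin b → ℝ) = 0 := by
  ext i j; simp [vecMulVec_apply]

theorem vecMulVec_smul_comm {a b : ℕ} (c : ℝ) (u : Fin a → ℝ) (v : Fin b → ℝ) :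
    vecMulVec (c • u) v = vecMulVec u (c • v) := by
  ext i j; simp [vecMulVec_apply]; ring

/-- the off-diagonal pair condition -/
def OffPair {m n p q : ℕ} (A : Matrix (Fin m) (Fin n) ℝ) (B : Matrix (Fin p) (Fin q) ℝ) : Prop :=
  ∀ (Y : Matrix (Fin m) (Fin q) ℝ) (Z : Matrix (Fin p) (Fin n) ℝ),
    B * Yᵀ = Z * Aᵀ → Yᵀ * A = Bᵀ * Z → Y = 0 ∧ Z = 0

theorem ssvp_blocks_iff {m n p q : ℕ} (A : Matrix (Fin m) (Fin n) ℝ)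
    (B : Matrix (Fin p) (Fin q) ℝ) :
    HasSSVP (Matrix.fromBlocks A 0 0 B) ↔ HasSSVP A ∧ HasSSVP B ∧ OffPair A B := by
  have hMT : (Matrix.fromBlocks A 0 0 B)ᵀ = Matrix.fromBlocks Aᵀ 0 0 Bᵀ := by
    rw [fromBlocks_transpose]; simp
  constructor
  · intro hM
    refine ⟨?_, ?_, ?_⟩
    · intro P h1 h2 h3
      have hs1 : (Matrix.fromBlocks P 0 0 (0 : Matrix (Fin p) (Fin q) ℝ) *
          (Matrix.fromBlocks A 0 0 B)ᵀ).IsSymm := by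
        rw [hMT, fromBlocks_multiply]
        simp only [Matrix.mul_zero, Matrix.zero_mul, add_zero, zero_add]
        exact isSymm_fromBlocks_iff.mpr ⟨h1, by simp, by simp, by simp [Matrix.IsSymm]⟩
      have hs2 : ((Matrix.fromBlocks A 0 0 B)ᵀ *
          Matrix.fromBlocks P 0 0 (0 : Matrix (Fin p) (Fin q) ℝ)).IsSymm := by
        rw [hMT, fromBlocks_multiply]
        simp only [Matrix.mul_zero, Matrix.zero_mul, add_zero, zero_add]
        exact isSymm_fromBlocks_iff.mpr ⟨h2, by simp, by simp, by simp [Matrix.IsSymm]⟩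
      have hs3 : ∀ i j, Matrix.fromBlocks A 0 0 B i j ≠ 0 →
          Matrix.fromBlocks P 0 0 (0 : Matrix (Fin p) (Fin q) ℝ) i j = 0 := by
        rintro (i | i) (j | j) hij <;> simp only [fromBlocks_apply₁₁, fromBlocks_apply₁₂,
          fromBlocks_apply₂₁, fromBlocks_apply₂₂, Matrix.zero_apply] at hij ⊢ <;>
        first | exact h3 i j hij | rfl | exact absurd rfl hij
      have h0 := hM _ hs1 hs2 hs3
      have := congrArg Matrix.toBlocks₁₁ h0
      rw [Matrix.toBlocks_fromBlocks₁₁] at this; exact this.trans (by ext i j; rfl)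
    · intro Q h1 h2 h3
      have hs1 : (Matrix.fromBlocks (0 : Matrix (Fin m) (Fin n) ℝ) 0 0 Q *
          (Matrix.fromBlocks A 0 0 B)ᵀ).IsSymm := by
        rw [hMT, fromBlocks_multiply]
        simp only [Matrix.mul_zero, Matrix.zero_mul, add_zero, zero_add]
        exact isSymm_fromBlocks_iff.mpr ⟨by simp [Matrix.IsSymm], by simp, by simp, h1⟩
      have hs2 : ((Matrix.fromBlocks A 0 0 B)ᵀ *
          Matrix.fromBlocks (0 : Matrix (Fin m) (Fin n) ℝ) 0 0 Q).IsSymm := by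
        rw [hMT, fromBlocks_multiply]
        simp only [Matrix.mul_zero, Matrix.zero_mul, add_zero, zero_add]
        exact isSymm_fromBlocks_iff.mpr ⟨by simp [Matrix.IsSymm], by simp, by simp, h2⟩
      have hs3 : ∀ i j, Matrix.fromBlocks A 0 0 B i j ≠ 0 →
          Matrix.fromBlocks (0 : Matrix (Fin m) (Fin n) ℝ) 0 0 Q i j = 0 := by
        rintro (i | i) (j | j) hij <;> simp only [fromBlocks_apply₁₁, fromBlocks_apply₁₂,
          fromBlocks_apply₂₁, fromBlocks_apply₂₂, Matrix.zero_apply] at hij ⊢ <;>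
        first | exact h3 i j hij | rfl | exact absurd rfl hij
      have h0 := hM _ hs1 hs2 hs3
      have := congrArg Matrix.toBlocks₂₂ h0
      rw [Matrix.toBlocks_fromBlocks₂₂] at this; exact this.trans (by ext i j; rfl)
    · intro Y Z e1 e2
      have hs1 : (Matrix.fromBlocks 0 Y Z 0 * (Matrix.fromBlocks A 0 0 B)ᵀ).IsSymm := by
        rw [hMT, fromBlocks_multiply]
        simp only [Matrix.mul_zero, Matrix.zero_mul, add_zero, zero_add]
        refine isSymm_fromBlocks_iff.mpr ⟨by simp [Matrix.IsSymm], ?_, ?_, by simp [Matrix.IsSymm]⟩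
        · rw [Matrix.transpose_mul, Matrix.transpose_transpose]; exact e1
        · rw [← e1, Matrix.transpose_mul, Matrix.transpose_transpose]
      have hs2 : ((Matrix.fromBlocks A 0 0 B)ᵀ * Matrix.fromBlocks 0 Y Z 0).IsSymm := by
        rw [hMT, fromBlocks_multiply]
        simp only [Matrix.mul_zero, Matrix.zero_mul, add_zero, zero_add]
        refine isSymm_fromBlocks_iff.mpr ⟨by simp [Matrix.IsSymm], ?_, ?_, by simp [Matrix.IsSymm]⟩
        · rw [Matrix.transpose_mul, Matrix.transpose_transpose]; exact e2
        · rw [← e2, Matrix.transpose_mul, Matrix.transpose_transpose]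
      have hs3 : ∀ i j, Matrix.fromBlocks A 0 0 B i j ≠ 0 →
          Matrix.fromBlocks 0 Y Z 0 i j = 0 := by
        rintro (i | i) (j | j) hij <;> simp only [fromBlocks_apply₁₁, fromBlocks_apply₁₂,
          fromBlocks_apply₂₁, fromBlocks_apply₂₂, Matrix.zero_apply] at hij ⊢ <;>
        first | rfl | exact absurd rfl hij
      have h0 := hM _ hs1 hs2 hs3
      constructor
      · have := congrArg Matrix.toBlocks₁₂ h0
        rw [Matrix.toBlocks_fromBlocks₁₂] at this; exact this.trans (by ext i j; rfl)
      · have := congrArg Matrix.toBlocks₂₁ h0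
        rw [Matrix.toBlocks_fromBlocks₂₁] at this; exact this.trans (by ext i j; rfl)
  · rintro ⟨hA, hB, hOP⟩ X h1 h2 h3
    obtain ⟨P, Y, Z, Q, hX⟩ : ∃ P Y Z Q, X = Matrix.fromBlocks P Y Z Q :=
      ⟨X.toBlocks₁₁, X.toBlocks₁₂, X.toBlocks₂₁, X.toBlocks₂₂, (fromBlocks_toBlocks X).symm⟩
    subst hX
    rw [hMT, fromBlocks_multiply] at h1 h2
    simp only [Matrix.mul_zero, Matrix.zero_mul, add_zero, zero_add] at h1 h2
    obtain ⟨hPA, hYZ, hZY, hQB⟩ := isSymm_fromBlocks_iff.mp h1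
    obtain ⟨hAP, hAY, hBZ, hBQ⟩ := isSymm_fromBlocks_iff.mp h2
    have hP : P = 0 := by
      refine hA P hPA hAP fun i j hij => ?_
      exact h3 (Sum.inl i) (Sum.inl j) (by simpa using hij)
    have hQ : Q = 0 := by
      refine hB Q hQB hBQ fun i j hij => ?_
      exact h3 (Sum.inr i) (Sum.inr j) (by simpa using hij)
    have he1 : B * Yᵀ = Z * Aᵀ := by
      rw [← hYZ, Matrix.transpose_mul, Matrix.transpose_transpose]
    have he2 : Yᵀ * A = Bᵀ * Z := by
      rw [← hAY, Matrix.transpose_mul, Matrix.transpose_transpose]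
    obtain ⟨hY, hZ⟩ := hOP Y Z he1 he2
    rw [hP, hQ, hY, hZ]
    ext (i | i) (j | j) <;> simp

theorem Ycore {m n p q : ℕ} (A : Matrix (Fin m) (Fin n) ℝ) (B : Matrix (Fin p) (Fin q) ℝ)
    (hc : ∀ i j, sv A i = sv B j → sv A i = 0)
    (hz : (∀ u : Fin m → ℝ, Aᵀ *ᵥ u = 0 → u = 0) ∨ (∀ v : Fin q → ℝ, B *ᵥ v = 0 → v = 0))
    (Y : Matrix (Fin m) (Fin q) ℝ)
    (hE : (Bᵀ * B) * Yᵀ = Yᵀ * (A * Aᵀ)) : Y = 0 := by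
  have hA' := Matrix.isHermitian_mul_conjTranspose_self A
  have hB' := Matrix.isHermitian_mul_conjTranspose_self B
  have hAt : A * Aᴴ = A * Aᵀ := by rw [conjT_eq]
  have hBt : B * Bᴴ = B * Bᵀ := by rw [conjT_eq]
  suffices hYt : Yᵀ = 0 by
    rw [← Matrix.transpose_transpose Y, hYt, Matrix.transpose_zero]
  apply vanish_basis Yᵀ (A * Aᴴ) hA'
  intro k
  set u := (⇑(hA'.eigenvectorBasis k) : Fin m → ℝ) with hudef
  set lam := hA'.eigenvalues k with hlamdef
  have hu : u ≠ 0 := by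
    intro h
    exact hA'.eigenvectorBasis.orthonormal.ne_zero k (by ext i; exact congrFun h i)
  have heig : (A * Aᵀ) *ᵥ u = lam • u := by rw [← hAt]; exact hA'.mulVec_eigenvectorBasis k
  show Yᵀ *ᵥ u = 0
  set v := Yᵀ *ᵥ u with hvdef
  have hv : (Bᵀ * B) *ᵥ v = lam • v := by
    rw [hvdef, Matrix.mulVec_mulVec, hE, ← Matrix.mulVec_mulVec, heig, Matrix.mulVec_smul]
  by_contra hv0
  by_cases hlam : lam = 0
  · rw [hlam, zero_smul] at hv
    rcases hz with h1 | h2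
    · have hgram : (Aᵀᵀ * Aᵀ) *ᵥ u = 0 := by
        rw [Matrix.transpose_transpose, heig, hlam, zero_smul]
      have hu0 : Aᵀ *ᵥ u = 0 := gram_ker Aᵀ u hgram
      exact hu (h1 u hu0)
    · have hBv : B *ᵥ v = 0 := gram_ker B v hv
      exact hv0 (h2 v hBv)
  · have hw0 : B *ᵥ v ≠ 0 := by
      intro h
      apply hv0
      have : lam • v = 0 := by
        rw [← hv, ← Matrix.mulVec_mulVec, h, Matrix.mulVec_zero]
      have := congrArg (fun x => lam⁻¹ • x) this
      simpa [smul_smul, inv_mul_cancel₀ hlam] using this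
    have hweig : (B * Bᴴ) *ᵥ (B *ᵥ v) = lam • (B *ᵥ v) := by
      rw [hBt]
      calc (B * Bᵀ) *ᵥ (B *ᵥ v) = ((B * Bᵀ) * B) *ᵥ v := Matrix.mulVec_mulVec v (B * Bᵀ) B
        _ = (B * (Bᵀ * B)) *ᵥ v := by rw [Matrix.mul_assoc]
        _ = B *ᵥ ((Bᵀ * B) *ᵥ v) := (Matrix.mulVec_mulVec v B (Bᵀ * B)).symm
        _ = B *ᵥ (lam • v) := by rw [hv]
        _ = lam • (B *ᵥ v) := Matrix.mulVec_smul B lam v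
    obtain ⟨j, hj⟩ := eig_mem (B * Bᴴ) hB' lam (B *ᵥ v) hw0 hweig
    have h1 : sv A k = sv B j := by
      unfold sv
      rw [hj]
    have h2 := hc k j h1
    have hnn := Matrix.eigenvalues_self_mul_conjTranspose_nonneg A k
    apply hlam
    have : Real.sqrt lam = 0 := h2
    nlinarith [Real.sq_sqrt hnn, Real.sqrt_nonneg lam]

theorem offpair_iff {m n p q : ℕ} (hsum : m + p ≤ n + q) (A : Matrix (Fin m) (Fin n) ℝ)
    (B : Matrix (Fin p) (Fin q) ℝ) :
    OffPair A B ↔ (m ≤ n ∧ p ≤ q) ∧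
      (∀ i j, sv A i = sv B j → sv A i = 0) ∧
      ((LinearIndependent ℝ (fun i => A i) ∧ LinearIndependent ℝ (fun i => B i)) ∨
        (m = n ∧ A.rank = m) ∨ (p = q ∧ B.rank = p)) := by
  constructor
  · intro hOP
    have trickY : ∀ (u : Fin m → ℝ) (v : Fin q → ℝ), u ≠ 0 → v ≠ 0 →
        Aᵀ *ᵥ u = 0 → B *ᵥ v = 0 → False := by
      intro u v hu hv hAu hBv
      have e1 : B * (vecMulVec u v)ᵀ = (0 : Matrix (Fin p) (Fin n) ℝ) * Aᵀ := by
        rw [vecMulVec_transpose', outer_mul_left, hBv, vecMulVec_zero_left, Matrix.zero_mul]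
      have e2 : (vecMulVec u v)ᵀ * A = Bᵀ * (0 : Matrix (Fin p) (Fin n) ℝ) := by
        rw [vecMulVec_transpose', outer_mul_right, ← Matrix.mulVec_transpose, hAu,
          vecMulVec_zero_right, Matrix.mul_zero]
      exact vecMulVec_ne_zero hu hv (hOP (vecMulVec u v) 0 e1 e2).1
    have trickZ : ∀ (w : Fin p → ℝ) (x : Fin n → ℝ), w ≠ 0 → x ≠ 0 →
        Bᵀ *ᵥ w = 0 → A *ᵥ x = 0 → False := by
      intro w x hw hx hBw hAx
      have e1 : B * (0 : Matrix (Fin m) (Fin q) ℝ)ᵀ = vecMulVec w x * Aᵀ := by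
        rw [outer_mul_right, Matrix.vecMul_transpose, hAx, vecMulVec_zero_right]
        simp
      have e2 : (0 : Matrix (Fin m) (Fin q) ℝ)ᵀ * A = Bᵀ * vecMulVec w x := by
        rw [outer_mul_left, hBw, vecMulVec_zero_left]
        simp
      exact vecMulVec_ne_zero hw hx (hOP 0 (vecMulVec w x) e1 e2).2
    have ham : m ≤ n := by
      by_contra h
      push_neg at h
      obtain ⟨u, hu, hAu⟩ := ker_exists Aᵀ h
      obtain ⟨v, hv, hBv⟩ := ker_exists B (by omega)
      exact trickY u v hu hv hAu hBv
    have hpq : p ≤ q := by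
      by_contra h
      push_neg at h
      obtain ⟨w, hw, hBw⟩ := ker_exists Bᵀ h
      obtain ⟨x, hx, hAx⟩ := ker_exists A (by omega)
      exact trickZ w x hw hx hBw hAx
    refine ⟨⟨ham, hpq⟩, ?_, ?_⟩
    · intro i j hij
      by_contra hne
      have hA' := Matrix.isHermitian_mul_conjTranspose_self A
      have hB' := Matrix.isHermitian_mul_conjTranspose_self B
      have hAt : A * Aᴴ = A * Aᵀ := by rw [conjT_eq]
      have hBt : B * Bᴴ = B * Bᵀ := by rw [conjT_eq]
      set lam := hA'.eigenvalues i with hlamdef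
      set mu := hB'.eigenvalues j with hmudef
      have hlnn := Matrix.eigenvalues_self_mul_conjTranspose_nonneg A i
      have hmnn := Matrix.eigenvalues_self_mul_conjTranspose_nonneg B j
      have hsv : sv A i = Real.sqrt lam := rfl
      have hsv' : sv B j = Real.sqrt mu := rfl
      have h1 : Real.sqrt lam = Real.sqrt mu := by rw [← hsv, ← hsv', hij]
      have hmulam : mu = lam := by
        have e1 : Real.sqrt mu ^ 2 = mu := Real.sq_sqrt hmnn
        have e2 : Real.sqrt lam ^ 2 = lam := Real.sq_sqrt hlnn
        rw [← e1, ← e2, h1]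
      have hσ : Real.sqrt lam ≠ 0 := by rw [← hsv]; exact hne
      set σ := Real.sqrt lam with hσdef
      have hσσ : σ * σ = lam := by
        have := Real.sq_sqrt hlnn
        nlinarith
      have hlam0 : lam ≠ 0 := by
        intro h
        exact hσ (by rw [hσdef, h, Real.sqrt_zero])
      set u := (⇑(hA'.eigenvectorBasis i) : Fin m → ℝ) with hudef
      set w := (⇑(hB'.eigenvectorBasis j) : Fin p → ℝ) with hwdef
      have hu : u ≠ 0 := by
        intro h
        exact hA'.eigenvectorBasis.orthonormal.ne_zero i (by ext r; exact congrFun h r)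
      have hw : w ≠ 0 := by
        intro h
        exact hB'.eigenvectorBasis.orthonormal.ne_zero j (by ext r; exact congrFun h r)
      have heigu : (A * Aᵀ) *ᵥ u = lam • u := by
        rw [← hAt]; exact hA'.mulVec_eigenvectorBasis i
      have heigw : (B * Bᵀ) *ᵥ w = lam • w := by
        rw [← hBt, ← hmulam]; exact hB'.mulVec_eigenvectorBasis j
      set y := σ⁻¹ • (Bᵀ *ᵥ w) with hydef
      set x := σ⁻¹ • (Aᵀ *ᵥ u) with hxdef
      have hBy : B *ᵥ y = σ • w := by
        rw [hydef, Matrix.mulVec_smul, Matrix.mulVec_mulVec, heigw, smul_smul]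
        rw [show σ⁻¹ * lam = σ by field_simp [← hσσ]; rw [← hσσ]; ring]
      have hAx : A *ᵥ x = σ • u := by
        rw [hxdef, Matrix.mulVec_smul, Matrix.mulVec_mulVec, heigu, smul_smul]
        rw [show σ⁻¹ * lam = σ by field_simp [← hσσ]; rw [← hσσ]; ring]
      have hAtu : Aᵀ *ᵥ u = σ • x := by
        rw [hxdef, smul_smul, mul_inv_cancel₀ hσ, one_smul]
      have hBtw : Bᵀ *ᵥ w = σ • y := by
        rw [hydef, smul_smul, mul_inv_cancel₀ hσ, one_smul]
      have e1 : B * (vecMulVec u y)ᵀ = vecMulVec w x * Aᵀ := by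
        rw [vecMulVec_transpose', outer_mul_left, hBy, outer_mul_right,
          Matrix.vecMul_transpose, hAx, vecMulVec_smul_comm]
      have e2 : (vecMulVec u y)ᵀ * A = Bᵀ * vecMulVec w x := by
        rw [vecMulVec_transpose', outer_mul_right, ← Matrix.mulVec_transpose, hAtu,
          outer_mul_left, hBtw, ← vecMulVec_smul_comm]
      have hy : y ≠ 0 := by
        intro h
        have hBtw0 : Bᵀ *ᵥ w = 0 := by rw [hBtw, h, smul_zero]
        have : lam • w = 0 := by
          rw [← heigw, ← Matrix.mulVec_mulVec, hBtw0, Matrix.mulVec_zero]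
        exact hw (by simpa [hlam0] using smul_eq_zero.mp this)
      exact vecMulVec_ne_zero hu hy (hOP (vecMulVec u y) (vecMulVec w x) e1 e2).1
    · by_contra hd
      push_neg at hd
      obtain ⟨hd1, hd2, hd3⟩ := hd
      by_cases hLAx : LinearIndependent ℝ (fun i => A i)
      case pos =>
        have hLB := hd1 hLAx
        rw [rows_indep_iff] at hLB
        push_neg at hLB
        obtain ⟨w, hBw, hw⟩ := hLB
        have hx : ∃ x, x ≠ 0 ∧ A *ᵥ x = 0 := by
          by_contra hcon
          push_neg at hcon
          have hrA : A.rank = n := (rank_width_iff A).mpr fun x hx => by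
            by_contra h0
            exact hcon x h0 hx
          have hnm : n ≤ m := by
            have := A.rank_le_card_height
            simp only [Fintype.card_fin] at this
            omega
          have hmn : m = n := le_antisymm ham hnm
          exact (hd2 hmn) (by rw [hrA, hmn])
        obtain ⟨x, hx0, hAx⟩ := hx
        exact trickZ w x hw hx0 hBw hAx
      case neg =>
        have hLA := hLAx
        rw [rows_indep_iff] at hLA
        push_neg at hLA
        obtain ⟨u, hAu, hu⟩ := hLA
        have hv : ∃ v, v ≠ 0 ∧ B *ᵥ v = 0 := by
          by_contra hcon
          push_neg at hcon
          have hrB : B.rank = q := (rank_width_iff B).mpr fun v hv => by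
            by_contra h0
            exact hcon v h0 hv
          have hqp : q ≤ p := by
            have := B.rank_le_card_height
            simp only [Fintype.card_fin] at this
            omega
          have hpq' : p = q := le_antisymm hpq hqp
          exact (hd3 hpq') (by rw [hrB, hpq'])
        obtain ⟨v, hv0, hBv⟩ := hv
        exact trickY u v hu hv0 hAu hBv
  · rintro ⟨⟨ham, hpq⟩, hc, hd⟩ Y Z e1 e2
    have hE : (Bᵀ * B) * Yᵀ = Yᵀ * (A * Aᵀ) := by
      calc (Bᵀ * B) * Yᵀ = Bᵀ * (B * Yᵀ) := by rw [Matrix.mul_assoc]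
        _ = Bᵀ * (Z * Aᵀ) := by rw [e1]
        _ = (Bᵀ * Z) * Aᵀ := by rw [Matrix.mul_assoc]
        _ = (Yᵀ * A) * Aᵀ := by rw [e2]
        _ = Yᵀ * (A * Aᵀ) := by rw [Matrix.mul_assoc]
    rcases hd with ⟨hLA, hLB⟩ | ⟨hmn, hrA⟩ | ⟨hpq', hrB⟩
    · have hzA := (rows_indep_iff A).mp hLA
      have hY : Y = 0 := Ycore A B hc (Or.inl hzA) Y hE
      have hZ : Z = 0 := by
        refine mul_zero_ker Bᵀ Z ((rows_indep_iff B).mp hLB) ?_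
        rw [← e2, hY]
        simp
      exact ⟨hY, hZ⟩
    · have hrAt : Aᵀ.rank = m := by rw [Matrix.rank_transpose]; exact hrA
      have hzA : ∀ u, Aᵀ *ᵥ u = 0 → u = 0 := (rank_width_iff Aᵀ).mp hrAt
      have hY : Y = 0 := Ycore A B hc (Or.inl hzA) Y hE
      have hArank_n : A.rank = n := hmn ▸ hrA
      have hzA2 : ∀ x, A *ᵥ x = 0 → x = 0 := (rank_width_iff A).mp hArank_n
      have hZ : Z = 0 := by
        have hZA : Z * Aᵀ = 0 := by rw [← e1, hY]; simp
        have hAZ : A * Zᵀ = 0 := by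
          have := congrArg Matrix.transpose hZA
          simpa [Matrix.transpose_mul, Matrix.transpose_transpose] using this
        have hZt := mul_zero_ker A Zᵀ hzA2 hAZ
        rw [← Matrix.transpose_transpose Z, hZt, Matrix.transpose_zero]
      exact ⟨hY, hZ⟩
    · have hrB_q : B.rank = q := by rw [hrB, hpq']
      have hzB : ∀ v, B *ᵥ v = 0 → v = 0 := (rank_width_iff B).mp hrB_q
      have hY : Y = 0 := Ycore A B hc (Or.inr hzB) Y hE
      have hrBt : Bᵀ.rank = p := by rw [Matrix.rank_transpose]; exact hrB
      have hzBt := (rank_width_iff Bᵀ).mp hrBt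
      have hZ : Z = 0 := mul_zero_ker Bᵀ Z hzBt (by rw [← e2, hY]; simp)
      exact ⟨hY, hZ⟩

theorem stmt_18 (m n p q : ℕ) (hsum : m + p ≤ n + q)
    (A : Matrix (Fin m) (Fin n) ℝ) (B : Matrix (Fin p) (Fin q) ℝ) :
    HasSSVP (Matrix.fromBlocks A 0 0 B) ↔
      (m ≤ n ∧ p ≤ q) ∧
      (HasSSVP A ∧ HasSSVP B) ∧
      (∀ i j, sv A i = sv B j → sv A i = 0) ∧
      ((LinearIndependent ℝ (fun i => A i) ∧ LinearIndependent ℝ (fun i => B i)) ∨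
        (m = n ∧ A.rank = m) ∨ (p = q ∧ B.rank = p)) := by
  rw [ssvp_blocks_iff, offpair_iff hsum]
  tauto
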